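/- Let G act line-transitively and point-imprimitively on a non-trivial finite regular linear space with line size k, and let G_α be a point stabilizer. Then for any subgroup M with G_α < M < G, both |G : M| < k(k-1)/2 and |M : G_α| < k(k-1)/2. -/

import Mathlib

open Pointwise

structure LinearSpace (P : Type*) [DecidableEq P] where
  lines : Finset (Finset P)
  exists_unique_line : ∀ a b : P, a ≠ b → ∃! L, L ∈ lines ∧ a ∈ L ∧ b ∈ L

namespace LinearSpace

variable {P : Type*} [DecidableEq P]

/-- Non-trivial: every line has at least 3 points and there are at least two lines. -/
def Nontrivial (S : LinearSpace P) : Prop :=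
  (∀ L ∈ S.lines, 3 ≤ L.card) ∧ 2 ≤ S.lines.card

/-- Regular with line size `k` and `r` lines per point. -/
def Regular [Fintype P] (S : LinearSpace P) (k r : ℕ) : Prop :=
  (∀ L ∈ S.lines, L.card = k) ∧ ∀ a : P, (S.lines.filter fun L => a ∈ L).card = r

/-- `G` acts as automorphisms of `S`, transitively on the set of lines. -/
def LineTrans (G : Type*) [Group G] [MulAction G P] (S : LinearSpace P) : Prop :=
  (∀ (g : G), ∀ L ∈ S.lines, g • L ∈ S.lines) ∧
    ∀ L₁ ∈ S.lines, ∀ L₂ ∈ S.lines, ∃ g : G, g • L₁ = L₂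

end LinearSpace

/-- A swap-closed finset of off-diagonal pairs has even cardinality. -/
lemma DD.even_card_of_swap {A : Type*} [DecidableEq A] (s : Finset (A × A))
    (hs : ∀ pq ∈ s, Prod.swap pq ∈ s) (hne : ∀ pq ∈ s, pq.1 ≠ pq.2) : Even s.card := by
  induction s using Finset.strongInduction with
  | _ s ih =>
    rcases s.eq_empty_or_nonempty with rfl | ⟨pq, hpq⟩
    · simp
    · have hsw : Prod.swap pq ∈ s := hs pq hpq
      have hpqne : Prod.swap pq ≠ pq := by
        intro h
        exact hne pq hpq (by simpa [Prod.ext_iff] using (congrArg Prod.fst h).symm)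
      set t := (s.erase pq).erase (Prod.swap pq) with ht
      have htsub : t ⊂ s := by
        refine Finset.ssubset_iff_of_subset ?_ |>.mpr ⟨pq, hpq, ?_⟩
        · intro x hx; exact Finset.mem_of_mem_erase (Finset.mem_of_mem_erase hx)
        · simp [ht]
      have hcard : t.card = s.card - 2 := by
        rw [ht, Finset.card_erase_of_mem (Finset.mem_erase.mpr ⟨hpqne, hsw⟩),
          Finset.card_erase_of_mem hpq]
        omega
      have hclosed : ∀ ab ∈ t, Prod.swap ab ∈ t := by
        intro ab hab
        have habs : ab ∈ s := Finset.mem_of_mem_erase (Finset.mem_of_mem_erase hab)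
        have h1 : ab ≠ pq := Finset.ne_of_mem_erase (Finset.mem_of_mem_erase hab)
        have h2 : ab ≠ Prod.swap pq := Finset.ne_of_mem_erase hab
        refine Finset.mem_erase.mpr ⟨?_, Finset.mem_erase.mpr ⟨?_, hs ab habs⟩⟩
        · intro h; exact h1 (by simpa using congrArg Prod.swap h)
        · intro h; exact h2 (by simpa using congrArg Prod.swap h)
      have hne' : ∀ ab ∈ t, ab.1 ≠ ab.2 := fun ab hab =>
        hne ab (Finset.mem_of_mem_erase (Finset.mem_of_mem_erase hab))
      have := ih t htsub hclosed hne'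
      have h2le : 2 ≤ s.card := by
        have : ({pq, Prod.swap pq} : Finset (A × A)) ⊆ s := by
          intro x hx; rcases Finset.mem_insert.mp hx with rfl | hx
          · exact hpq
          · simpa using (Finset.mem_singleton.mp hx) ▸ hsw
        calc 2 = ({pq, Prod.swap pq} : Finset (A × A)).card := by
                rw [Finset.card_insert_of_notMem (by simpa using hpqne.symm)]; simp
          _ ≤ s.card := Finset.card_le_card this
      obtain ⟨c, hc⟩ := this
      exact ⟨c + 1, by omega⟩

/-- Partition of a point set not containing `p` by the lines through `p`. -/
lemma DD.cover {P : Type*} [DecidableEq P] (S : LinearSpace P) (p : P) (T : Finset P)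
    (hp : p ∉ T) :
    ∑ L ∈ S.lines.filter (fun L => p ∈ L), (L ∩ T).card = T.card := by
  classical
  have hpart : T = (S.lines.filter (fun L => p ∈ L)).biUnion (fun L => L ∩ T) := by
    ext q
    constructor
    · intro hq
      have hqp : q ≠ p := fun h => hp (h ▸ hq)
      obtain ⟨L, ⟨hL, hpL, hqL⟩, -⟩ := S.exists_unique_line p q (Ne.symm hqp)
      exact Finset.mem_biUnion.mpr ⟨L, Finset.mem_filter.mpr ⟨hL, hpL⟩,
        Finset.mem_inter.mpr ⟨hqL, hq⟩⟩
    · intro hq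
      obtain ⟨L, -, hq⟩ := Finset.mem_biUnion.mp hq
      exact (Finset.mem_inter.mp hq).2
  have hdisj : ∀ L₁ ∈ S.lines.filter (fun L => p ∈ L), ∀ L₂ ∈ S.lines.filter (fun L => p ∈ L),
      L₁ ≠ L₂ → Disjoint (L₁ ∩ T) (L₂ ∩ T) := by
    intro L₁ hL₁ L₂ hL₂ hne
    rw [Finset.disjoint_left]
    intro q hq1 hq2
    obtain ⟨hL₁', hpL₁⟩ := Finset.mem_filter.mp hL₁
    obtain ⟨hL₂', hpL₂⟩ := Finset.mem_filter.mp hL₂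
    obtain ⟨hq1L, hqT⟩ := Finset.mem_inter.mp hq1
    obtain ⟨hq2L, -⟩ := Finset.mem_inter.mp hq2
    have hqp : p ≠ q := fun h => hp (h ▸ hqT)
    obtain ⟨L, -, huniq⟩ := S.exists_unique_line p q hqp
    exact hne ((huniq L₁ ⟨hL₁', hpL₁, hq1L⟩).trans (huniq L₂ ⟨hL₂', hpL₂, hq2L⟩).symm)
  conv_rhs => rw [hpart]
  rw [Finset.card_biUnion hdisj]

namespace DD

open Pointwise MulAction Finset

variable {P : Type*} [Fintype P] [DecidableEq P] (S : LinearSpace P) {k r : ℕ}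

/-- Double count of flags: `b * k = n * r`. -/
lemma flag_count (hreg : S.Regular k r) :
    S.lines.card * k = Fintype.card P * r := by
  classical
  have key : ∑ L ∈ S.lines, L.card = ∑ p : P, (S.lines.filter fun L => p ∈ L).card := by
    simp only [Finset.card_filter]
    rw [Finset.sum_comm]
    congr 1
    ext L
    rw [Finset.card_eq_sum_ones L]
    simp
  rw [Finset.sum_congr rfl hreg.1, Finset.sum_const, smul_eq_mul] at key
  simp only [hreg.2, Finset.sum_const, Finset.card_univ, smul_eq_mul] at key
  exact key

lemma lines_through_eq (hreg : S.Regular k r) (p : P) :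
    Fintype.card P = r * (k - 1) + 1 := by
  classical
  have hcov := DD.cover S p (Finset.univ.erase p) (Finset.notMem_erase p _)
  have hterm : ∀ L ∈ S.lines.filter (fun L => p ∈ L),
      (L ∩ Finset.univ.erase p).card = k - 1 := by
    intro L hL
    obtain ⟨hL', hpL⟩ := Finset.mem_filter.mp hL
    have : L ∩ Finset.univ.erase p = L.erase p := by
      ext q; simp [Finset.mem_erase, and_comm]
    rw [this, Finset.card_erase_of_mem hpL, hreg.1 L hL']
  rw [Finset.sum_congr rfl hterm, Finset.sum_const, smul_eq_mul, hreg.2 p,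
    Finset.card_erase_of_mem (Finset.mem_univ p), Finset.card_univ] at hcov
  have : 1 ≤ Fintype.card P := Fintype.card_pos_iff.mpr ⟨p⟩
  omega

lemma k_ge_three (hnt : S.Nontrivial) (hreg : S.Regular k r) : 3 ≤ k := by
  obtain ⟨L, hL⟩ := Finset.card_pos.mp (show 0 < S.lines.card by have := hnt.2; omega)
  exact (hreg.1 L hL) ▸ hnt.1 L hL

lemma r_ge_two (hnt : S.Nontrivial) (hreg : S.Regular k r) : 2 ≤ r := by
  classical
  obtain ⟨L₁, hL₁, L₂, hL₂, hne⟩ := Finset.one_lt_card.mp hnt.2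
  -- there is a point of L₂ not on L₁
  have hsub : ¬ (L₂ ⊆ L₁) := by
    intro hsub
    obtain ⟨a, ha, b, hb, hab⟩ := Finset.one_lt_card.mp (by
      have := hnt.1 L₂ hL₂; omega : 1 < L₂.card)
    obtain ⟨L, -, huniq⟩ := S.exists_unique_line a b hab
    exact hne ((huniq L₂ ⟨hL₂, ha, hb⟩).trans (huniq L₁ ⟨hL₁, hsub ha, hsub hb⟩).symm).symm
  obtain ⟨p, hpL₂, hpL₁⟩ := Finset.not_subset.mp hsub
  obtain ⟨a, ha, b, hb, hab⟩ := Finset.one_lt_card.mp (by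
    have := hnt.1 L₁ hL₁; omega : 1 < L₁.card)
  have hpa : p ≠ a := fun h => hpL₁ (h ▸ ha)
  have hpb : p ≠ b := fun h => hpL₁ (h ▸ hb)
  obtain ⟨La, ⟨hLa, hpLa, haLa⟩, -⟩ := S.exists_unique_line p a hpa
  obtain ⟨Lb, ⟨hLb, hpLb, hbLb⟩, -⟩ := S.exists_unique_line p b hpb
  have hLab : La ≠ Lb := by
    rintro rfl
    obtain ⟨L, -, huniq⟩ := S.exists_unique_line a b hab
    have h1 : La = L₁ := (huniq La ⟨hLa, haLa, hbLb⟩).trans (huniq L₁ ⟨hL₁, ha, hb⟩).symm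
    exact hpL₁ (h1 ▸ hpLa)
  have : 1 < (S.lines.filter fun L => p ∈ L).card :=
    Finset.one_lt_card.mpr ⟨La, Finset.mem_filter.mpr ⟨hLa, hpLa⟩,
      Lb, Finset.mem_filter.mpr ⟨hLb, hpLb⟩, hLab⟩
  rw [hreg.2 p] at this
  omega

end DD

namespace DD

open Pointwise MulAction Finset

variable {P G : Type*} [Fintype P] [DecidableEq P] [Group G] [MulAction G P]
  (S : LinearSpace P) {k r : ℕ}

lemma pretransitive (hnt : S.Nontrivial) (hreg : S.Regular k r)
    (hlt : S.LineTrans G) : MulAction.IsPretransitive G P := by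
  classical
  have key : ∀ a q : P, q ∈ MulAction.orbit G a := by
    intro a q
    by_contra hq
    set O : Finset P := Finset.univ.filter (· ∈ MulAction.orbit G a) with hO
    have hmemO : ∀ x, x ∈ O ↔ x ∈ MulAction.orbit G a := by
      intro x; simp [hO]
    have haO : a ∈ O := (hmemO a).mpr (MulAction.mem_orbit_self a)
    have hp : q ∉ O := fun h => hq ((hmemO q).mp h)
    have hsm : ∀ (g : G) (x : P), x ∈ MulAction.orbit G a → g • x ∈ MulAction.orbit G a := by
      intro g x hx
      obtain ⟨h, rfl⟩ := MulAction.mem_orbit_iff.mp hx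
      rw [← mul_smul]
      exact MulAction.mem_orbit a (g * h)
    have hOinv : ∀ g : G, g • O = O := by
      intro g
      ext x
      rw [Finset.mem_smul_finset]
      constructor
      · rintro ⟨b, hb, rfl⟩
        exact (hmemO _).mpr (hsm g b ((hmemO b).mp hb))
      · intro hx
        exact ⟨g⁻¹ • x, (hmemO _).mpr (hsm g⁻¹ x ((hmemO x).mp hx)),
          smul_inv_smul g x⟩
    have hconst : ∀ L₁ ∈ S.lines, ∀ L₂ ∈ S.lines, (L₁ ∩ O).card = (L₂ ∩ O).card := by
      intro L₁ hL₁ L₂ hL₂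
      obtain ⟨g, hg⟩ := hlt.2 L₁ hL₁ L₂ hL₂
      conv_rhs => rw [← hg, ← hOinv g, ← Finset.smul_finset_inter]
      rw [Finset.card_smul_finset]
    -- a line through a
    have hne : (S.lines.filter (fun L => a ∈ L)).Nonempty := by
      rw [← Finset.card_pos, hreg.2 a]
      have := r_ge_two S hnt hreg; omega
    obtain ⟨La, hLa⟩ := hne
    set kO := (La ∩ O).card with hkO
    have hLa' := Finset.mem_filter.mp hLa
    have hkO1 : 1 ≤ kO := Finset.card_pos.mpr ⟨a, Finset.mem_inter.mpr ⟨hLa'.2, haO⟩⟩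
    -- count 1 : lines through a
    have e1 : r * (kO - 1) = O.card - 1 := by
      have hcov := DD.cover S a (O.erase a) (Finset.notMem_erase a O)
      have hterm : ∀ L ∈ S.lines.filter (fun L => a ∈ L),
          (L ∩ O.erase a).card = kO - 1 := by
        intro L hL
        obtain ⟨hL', haL⟩ := Finset.mem_filter.mp hL
        have h1 : L ∩ O.erase a = (L ∩ O).erase a := by
          ext x; simp [Finset.mem_erase]; tauto
        rw [h1, Finset.card_erase_of_mem (Finset.mem_inter.mpr ⟨haL, haO⟩),
          hconst L hL' La hLa'.1]
      rw [Finset.sum_congr rfl hterm, Finset.sum_const, smul_eq_mul, hreg.2 a,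
        Finset.card_erase_of_mem haO] at hcov
      exact hcov
    -- count 2 : lines through q
    have e2 : r * kO = O.card := by
      have hcov := DD.cover S q O hp
      have hterm : ∀ L ∈ S.lines.filter (fun L => q ∈ L),
          (L ∩ O).card = kO := by
        intro L hL
        exact hconst L (Finset.mem_filter.mp hL).1 La hLa'.1
      rw [Finset.sum_congr rfl hterm, Finset.sum_const, smul_eq_mul, hreg.2 q] at hcov
      exact hcov
    have hOcard : 1 ≤ O.card := Finset.card_pos.mpr ⟨a, haO⟩
    have hr2 := r_ge_two S hnt hreg
    obtain ⟨m, hm⟩ : ∃ m, kO = m + 1 := ⟨kO - 1, by omega⟩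
    rw [hm] at e1 e2
    have e1' : r * m = O.card - 1 := by simpa using e1
    have e2' : r * m + r = O.card := by rw [← e2]; ring
    omega
  constructor
  intro p q
  exact MulAction.mem_orbit_iff.mp (key p q)

end DD

open Pointwise

set_option maxHeartbeats 2000000 in
theorem stmt13 {P G : Type*} [Fintype P] [DecidableEq P] [Group G] [MulAction G P]
    (S : LinearSpace P) (k r : ℕ)
    (hnt : S.Nontrivial) (hreg : S.Regular k r) (hlt : S.LineTrans G)
    (α : P) (M : Subgroup G)
    (h1 : MulAction.stabilizer G α < M) (h2 : M < ⊤) :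
    2 * M.index < k * (k - 1) ∧
      2 * (MulAction.stabilizer G α).relIndex M < k * (k - 1) := by
  classical
  have hk3 : 3 ≤ k := DD.k_ge_three S hnt hreg
  have hr2 : 2 ≤ r := DD.r_ge_two S hnt hreg
  haveI htrans : MulAction.IsPretransitive G P := DD.pretransitive S hnt hreg hlt
  set B : Set P := MulAction.orbit M α with hB
  have hBblock : MulAction.IsBlock G B := MulAction.IsBlock.of_orbit h1.le
  have hstabB : MulAction.stabilizer G B = M := MulAction.stabilizer_orbit_eq h1.le
  have hαB : α ∈ B := MulAction.mem_orbit_self α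
  set d := (MulAction.stabilizer G α).relIndex M with hd
  set c := M.index with hc
  set n := Fintype.card P with hn'
  have hdcard : B.ncard = d := by
    rw [hd, ← hstabB]
    exact hBblock.ncard_block_eq_relIndex hαB
  have hn : d * c = n := by
    have h := Subgroup.relIndex_mul_index h1.le
    rw [MulAction.index_stabilizer_of_transitive] at h
    simpa [Nat.card_eq_fintype_card, hd, hc, hn'] using h
  have hn1 : 1 ≤ n := Fintype.card_pos_iff.mpr ⟨α⟩
  -- d ≥ 2
  obtain ⟨m, hmM, hmst⟩ := SetLike.exists_of_lt h1
  have hβB : m • α ∈ B := ⟨⟨m, hmM⟩, rfl⟩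
  have hβα : m • α ≠ α := fun h => hmst (MulAction.mem_stabilizer_iff.mpr h)
  have hd2 : 2 ≤ d := by
    rw [← hdcard]
    have : 1 < B.ncard := Set.one_lt_ncard_iff (Set.toFinite B) |>.mpr
      ⟨m • α, α, hβB, hαB, hβα⟩
    omega
  -- c ≥ 2
  have hc2 : 2 ≤ c := by
    have hc1 : c ≠ 1 := fun h => h2.ne (Subgroup.index_eq_one.mp h)
    have hc0 : c ≠ 0 := by intro h; rw [h, mul_zero] at hn; omega
    omega
  -- the block relation
  set Rel : P → P → Prop := fun p q => ∃ g : G, p ∈ g • B ∧ q ∈ g • B with hRel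
  have hRelsymm : ∀ p q, Rel p q → Rel q p := by
    rintro p q ⟨g, hp, hq⟩; exact ⟨g, hq, hp⟩
  have hRelrefl : ∀ p q, Rel p q → Rel p p := fun p q ⟨g, hp, _⟩ => ⟨g, hp, hp⟩
  have hRelinv : ∀ (g : G) (p q : P), Rel p q → Rel (g • p) (g • q) := by
    rintro g p q ⟨h, hp, hq⟩
    exact ⟨g * h, by rw [mul_smul]; exact Set.smul_mem_smul_set hp,
      by rw [mul_smul]; exact Set.smul_mem_smul_set hq⟩
  -- block finset of each point
  have hblocks : ∀ p : P, ∃ C : Finset P, p ∈ C ∧ C.card = d ∧ ∀ q, Rel p q ↔ q ∈ C := by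
    intro p
    obtain ⟨g, hg⟩ := htrans.exists_smul_eq α p
    refine ⟨Finset.univ.filter (· ∈ g • B), ?_, ?_, ?_⟩
    · simp only [Finset.mem_filter, Finset.mem_univ, true_and]
      exact hg ▸ Set.smul_mem_smul_set hαB
    · have h1' : (Finset.univ.filter (· ∈ g • B)) = (g • B).toFinset := by
        ext x
        simp only [Finset.mem_filter, Finset.mem_univ, true_and, Set.mem_toFinset]
      rw [h1', ← Set.ncard_eq_toFinset_card', Set.ncard_smul_set, hdcard]
    · intro q
      simp only [Finset.mem_filter, Finset.mem_univ, true_and]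
      constructor
      · rintro ⟨h, hp', hq'⟩
        rcases eq_or_ne (h • B) (g • B) with heq | hne
        · exact heq ▸ hq'
        · exact absurd (hg ▸ Set.smul_mem_smul_set hαB)
            (fun hpg => (Set.disjoint_left.mp (hBblock hne) hp') hpg)
      · intro hq'
        exact ⟨g, hg ▸ Set.smul_mem_smul_set hαB, hq'⟩
  -- inner pair count of a line
  set xcount : Finset P → ℕ :=
    fun L => (L.offDiag.filter fun pq => Rel pq.1 pq.2).card with hxc
  have hxconst : ∀ L₁ ∈ S.lines, ∀ L₂ ∈ S.lines, xcount L₁ = xcount L₂ := by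
    intro L₁ hL₁ L₂ hL₂
    obtain ⟨g, hg⟩ := hlt.2 L₁ hL₁ L₂ hL₂
    show (L₁.offDiag.filter fun pq => Rel pq.1 pq.2).card
      = (L₂.offDiag.filter fun pq => Rel pq.1 pq.2).card
    apply Finset.card_nbij' (fun pq => (g • pq.1, g • pq.2)) (fun pq => (g⁻¹ • pq.1, g⁻¹ • pq.2))
    · intro pq hpq
      obtain ⟨hod, hrel⟩ := Finset.mem_filter.mp hpq
      obtain ⟨hp, hq, hne⟩ := Finset.mem_offDiag.mp hod
      refine Finset.mem_filter.mpr ⟨Finset.mem_offDiag.mpr ⟨?_, ?_, ?_⟩, hRelinv g _ _ hrel⟩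
      · rw [← hg]; exact Finset.smul_mem_smul_finset hp
      · rw [← hg]; exact Finset.smul_mem_smul_finset hq
      · exact fun h => hne (MulAction.injective g h)
    · intro pq hpq
      obtain ⟨hod, hrel⟩ := Finset.mem_filter.mp hpq
      obtain ⟨hp, hq, hne⟩ := Finset.mem_offDiag.mp hod
      rw [← hg] at hp hq
      refine Finset.mem_filter.mpr ⟨Finset.mem_offDiag.mpr ⟨?_, ?_, ?_⟩, hRelinv g⁻¹ _ _ hrel⟩
      · simpa using Finset.smul_mem_smul_finset (a := g⁻¹) hp
      · simpa using Finset.smul_mem_smul_finset (a := g⁻¹) hq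
      · exact fun h => hne (MulAction.injective g⁻¹ h)
    · intro pq _; simp
    · intro pq _; simp
  obtain ⟨L₀, hL₀⟩ := Finset.card_pos.mp (show 0 < S.lines.card by have := hnt.2; omega)
  set x₂ := xcount L₀ with hx₂
  set b := S.lines.card with hb
  -- global count : b * x₂ = n * (d - 1)
  have hA : b * x₂ = n * (d - 1) := by
    set IP : Finset (P × P) :=
      (Finset.univ : Finset P).offDiag.filter (fun pq => Rel pq.1 pq.2) with hIP
    have hcard1 : IP.card = b * x₂ := by
      have hIP1 : IP = S.lines.biUnion
          (fun L => L.offDiag.filter fun pq => Rel pq.1 pq.2) := by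
        ext pq
        constructor
        · intro h
          obtain ⟨hod, hrel⟩ := Finset.mem_filter.mp h
          have hne := (Finset.mem_offDiag.mp hod).2.2
          obtain ⟨L, ⟨hL, hp, hq⟩, -⟩ := S.exists_unique_line pq.1 pq.2 hne
          exact Finset.mem_biUnion.mpr ⟨L, hL,
            Finset.mem_filter.mpr ⟨Finset.mem_offDiag.mpr ⟨hp, hq, hne⟩, hrel⟩⟩
        · intro h
          obtain ⟨L, hL, hpq⟩ := Finset.mem_biUnion.mp h
          obtain ⟨hod, hrel⟩ := Finset.mem_filter.mp hpq
          obtain ⟨-, -, hne⟩ := Finset.mem_offDiag.mp hod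
          exact Finset.mem_filter.mpr
            ⟨Finset.mem_offDiag.mpr ⟨Finset.mem_univ _, Finset.mem_univ _, hne⟩, hrel⟩
      have hdisj : ∀ L₁ ∈ S.lines, ∀ L₂ ∈ S.lines, L₁ ≠ L₂ →
          Disjoint (L₁.offDiag.filter fun pq => Rel pq.1 pq.2)
            (L₂.offDiag.filter fun pq => Rel pq.1 pq.2) := by
        intro L₁ hL₁ L₂ hL₂ hne
        rw [Finset.disjoint_left]
        intro pq h1' h2'
        obtain ⟨hod1, -⟩ := Finset.mem_filter.mp h1'
        obtain ⟨hod2, -⟩ := Finset.mem_filter.mp h2'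
        obtain ⟨hp1, hq1, hpqne⟩ := Finset.mem_offDiag.mp hod1
        obtain ⟨hp2, hq2, -⟩ := Finset.mem_offDiag.mp hod2
        obtain ⟨L, -, huniq⟩ := S.exists_unique_line pq.1 pq.2 hpqne
        exact hne ((huniq L₁ ⟨hL₁, hp1, hq1⟩).trans (huniq L₂ ⟨hL₂, hp2, hq2⟩).symm)
      rw [hIP1, Finset.card_biUnion hdisj]
      rw [Finset.sum_congr rfl (fun L hL => hxconst L hL L₀ hL₀), Finset.sum_const,
        smul_eq_mul]
    have hcard2 : IP.card = n * (d - 1) := by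
      rw [Finset.card_eq_sum_card_fiberwise
        (f := Prod.fst) (t := Finset.univ) (fun x _ => Finset.mem_univ _)]
      have hfib : ∀ p : P, (IP.filter fun pq => pq.1 = p).card = d - 1 := by
        intro p
        obtain ⟨C, hpC, hCcard, hCmem⟩ := hblocks p
        have : IP.filter (fun pq => pq.1 = p) = {p} ×ˢ (C.erase p) := by
          ext pq
          simp only [hIP, Finset.mem_filter, Finset.mem_offDiag, Finset.mem_univ, true_and,
            Finset.mem_product, Finset.mem_singleton, Finset.mem_erase]
          constructor
          · rintro ⟨⟨hne, hrel⟩, rfl⟩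
            exact ⟨rfl, Ne.symm hne, (hCmem pq.2).mp hrel⟩
          · rintro ⟨h1', h2', h3'⟩
            exact ⟨⟨Ne.symm (h1' ▸ h2'), h1' ▸ (hCmem pq.2).mpr h3'⟩, h1'⟩
        rw [this, Finset.card_product, Finset.card_singleton, one_mul,
          Finset.card_erase_of_mem hpC, hCcard]
      rw [Finset.sum_congr rfl (fun p _ => hfib p), Finset.sum_const, smul_eq_mul,
        Finset.card_univ]
    omega
  -- flag count and point count
  have hB2 : b * k = n * r := DD.flag_count S hreg
  have hC : n = r * (k - 1) + 1 := DD.lines_through_eq S hreg α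
  -- x₂ * r = (d-1) * k
  have hxr : x₂ * r = (d - 1) * k := by
    have h : n * (x₂ * r) = n * ((d - 1) * k) := by
      calc n * (x₂ * r) = (b * k) * x₂ := by rw [hB2]; ring
        _ = (b * x₂) * k := by ring
        _ = (n * (d - 1)) * k := by rw [hA]
        _ = n * ((d - 1) * k) := by ring
    exact Nat.eq_of_mul_eq_mul_left (show 0 < n by omega) h
  -- master identity
  have hM : x₂ * (n - 1) = (d - 1) * (k * (k - 1)) := by
    have hn1' : n - 1 = r * (k - 1) := by omega
    rw [hn1', show x₂ * (r * (k - 1)) = (x₂ * r) * (k - 1) by ring, hxr]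
    ring
  -- x₂ ≥ 2
  have hx2 : 2 ≤ x₂ := by
    have hrelαβ : Rel α (m • α) := ⟨1, by simpa using hαB, by simpa using hβB⟩
    obtain ⟨L, ⟨hL, hαL, hβL⟩, -⟩ := S.exists_unique_line α (m • α) (Ne.symm hβα)
    have hsub : ({(α, m • α), (m • α, α)} : Finset (P × P)) ⊆
        L.offDiag.filter fun pq => Rel pq.1 pq.2 := by
      intro pq hpq
      rcases Finset.mem_insert.mp hpq with rfl | hpq
      · exact Finset.mem_filter.mpr ⟨Finset.mem_offDiag.mpr ⟨hαL, hβL, Ne.symm hβα⟩, hrelαβ⟩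
      · rw [Finset.mem_singleton.mp hpq]
        exact Finset.mem_filter.mpr ⟨Finset.mem_offDiag.mpr ⟨hβL, hαL, hβα⟩,
          hRelsymm _ _ hrelαβ⟩
    have hcard2' : ({(α, m • α), (m • α, α)} : Finset (P × P)).card = 2 := by
      rw [Finset.card_insert_of_notMem (by simp [hβα, Ne.symm hβα, Prod.ext_iff])]
      simp
    calc 2 = ({(α, m • α), (m • α, α)} : Finset (P × P)).card := hcard2'.symm
      _ ≤ xcount L := Finset.card_le_card hsub
      _ = x₂ := hxconst L hL L₀ hL₀
  -- x₂ even
  have heven : Even x₂ := by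
    apply DD.even_card_of_swap
    · intro pq hpq
      obtain ⟨hod, hrel⟩ := Finset.mem_filter.mp hpq
      obtain ⟨hp, hq, hne⟩ := Finset.mem_offDiag.mp hod
      exact Finset.mem_filter.mpr ⟨Finset.mem_offDiag.mpr ⟨hq, hp, Ne.symm hne⟩,
        hRelsymm _ _ hrel⟩
    · intro pq hpq
      obtain ⟨hod, -⟩ := Finset.mem_filter.mp hpq
      exact (Finset.mem_offDiag.mp hod).2.2
  -- x₂ + 2 ≤ k * (k-1)
  have hx2' : x₂ + 2 ≤ k * (k - 1) := by
    -- there is a point not related to α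
    have hex : ∃ p : P, ¬ Rel α p := by
      by_contra hno
      push_neg at hno
      obtain ⟨C, hαC, hCcard, hCmem⟩ := hblocks α
      have : (Finset.univ : Finset P) ⊆ C := fun q _ => (hCmem q).mp (hno q)
      have := Finset.card_le_card this
      rw [Finset.card_univ, hCcard] at this
      nlinarith [hn, hd2, hc2]
    obtain ⟨p, hnp⟩ := hex
    have hpα : p ≠ α := by
      rintro rfl
      exact hnp ⟨1, by simpa using hαB, by simpa using hαB⟩
    obtain ⟨L, ⟨hL, hαL, hpL⟩, -⟩ := S.exists_unique_line α p (Ne.symm hpα)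
    have hsplit := Finset.card_filter_add_card_filter_not
      (s := L.offDiag) (p := fun pq => Rel pq.1 pq.2)
    have hoff : L.offDiag.card = k * k - k := by
      rw [Finset.offDiag_card, hreg.1 L hL]
    have houter : 2 ≤ (L.offDiag.filter fun pq => ¬ Rel pq.1 pq.2).card := by
      have hsub : ({(α, p), (p, α)} : Finset (P × P)) ⊆
          L.offDiag.filter fun pq => ¬ Rel pq.1 pq.2 := by
        intro pq hpq
        rcases Finset.mem_insert.mp hpq with rfl | hpq
        · exact Finset.mem_filter.mpr ⟨Finset.mem_offDiag.mpr ⟨hαL, hpL, Ne.symm hpα⟩, hnp⟩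
        · rw [Finset.mem_singleton.mp hpq]
          exact Finset.mem_filter.mpr ⟨Finset.mem_offDiag.mpr ⟨hpL, hαL, hpα⟩,
            fun h => hnp (hRelsymm _ _ h)⟩
      have hcard2' : ({(α, p), (p, α)} : Finset (P × P)).card = 2 := by
        rw [Finset.card_insert_of_notMem (by simp [hpα, Ne.symm hpα, Prod.ext_iff])]
        simp
      calc 2 = ({(α, p), (p, α)} : Finset (P × P)).card := hcard2'.symm
        _ ≤ _ := Finset.card_le_card hsub
    have hxL : xcount L = x₂ := hxconst L hL L₀ hL₀
    have hkk : k * (k - 1) = k * k - k := by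
      rw [← Nat.pred_eq_sub_one, Nat.mul_pred]
    rw [hkk]
    have : xcount L + (L.offDiag.filter fun pq => ¬ Rel pq.1 pq.2).card = k * k - k := by
      rw [← hoff]; exact hsplit
    omega
  -- final arithmetic over ℤ
  have hkk1 : (1 : ℕ) ≤ k := by omega
  have hKc : ((k * (k - 1) : ℕ) : ℤ) = (k : ℤ) * ((k : ℤ) - 1) := by
    rw [Nat.cast_mul, Nat.cast_sub hkk1, Nat.cast_one]
  have hMz : (x₂ : ℤ) * ((n : ℤ) - 1) = ((d : ℤ) - 1) * ((k : ℤ) * ((k : ℤ) - 1)) := by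
    have h := congrArg (fun t : ℕ => (t : ℤ)) hM
    simp only [Nat.cast_mul, Nat.cast_sub (show 1 ≤ n by omega),
      Nat.cast_sub (show 1 ≤ d by omega), Nat.cast_sub hkk1, Nat.cast_one] at h
    exact h
  have hnz : (n : ℤ) = (d : ℤ) * c := by exact_mod_cast hn.symm
  have hd2z : (2 : ℤ) ≤ (d : ℤ) := by exact_mod_cast hd2
  have hc2z : (2 : ℤ) ≤ (c : ℤ) := by exact_mod_cast hc2
  have hx2z : (2 : ℤ) ≤ (x₂ : ℤ) := by exact_mod_cast hx2
  have hx2z' : (x₂ : ℤ) + 2 ≤ (k : ℤ) * ((k : ℤ) - 1) := by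
    have h := (Nat.cast_le (α := ℤ)).mpr hx2'
    rw [hKc] at h
    push_cast at h
    linarith
  have hn1z : (3 : ℤ) ≤ (n : ℤ) - 1 := by nlinarith [hnz, hd2z, hc2z]
  constructor
  · -- 2 * c < k * (k - 1)
    have f1 : (2 : ℤ) * ((n : ℤ) - 1) ≤ (x₂ : ℤ) * ((n : ℤ) - 1) :=
      mul_le_mul_of_nonneg_right hx2z (by linarith)
    rw [hMz] at f1
    have hgoal : 2 * (c : ℤ) < (k : ℤ) * ((k : ℤ) - 1) := by
      nlinarith [f1, hnz, hd2z, hc2z]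
    have h2 : ((2 * c : ℕ) : ℤ) < ((k * (k - 1) : ℕ) : ℤ) := by
      rw [hKc]; push_cast; linarith
    exact_mod_cast h2
  · -- 2 * d < k * (k - 1)
    have hE : (d : ℤ) * ((k : ℤ) * ((k : ℤ) - 1) - (x₂ : ℤ) * c)
        = (k : ℤ) * ((k : ℤ) - 1) - x₂ := by
      linear_combination (-1 : ℤ) * hMz + (x₂ : ℤ) * hnz
    have hpos : 0 < (k : ℤ) * ((k : ℤ) - 1) - (x₂ : ℤ) * c := by
      nlinarith [hE, hd2z, hx2z, hx2z']
    obtain ⟨x', hx'⟩ := heven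
    have hKeven : Even (k * (k - 1)) := by
      have hpar := Nat.even_mul_succ_self (k - 1)
      rw [Nat.sub_add_cancel hkk1] at hpar
      rwa [mul_comm]
    obtain ⟨K', hK'⟩ := hKeven
    have hx'z : (x₂ : ℤ) = 2 * x' := by rw [hx']; push_cast; ring
    have hK'z : (k : ℤ) * ((k : ℤ) - 1) = 2 * K' := by
      rw [← hKc, hK']; push_cast; ring
    have h2le : 2 ≤ (k : ℤ) * ((k : ℤ) - 1) - (x₂ : ℤ) * c := by
      have heq : (k : ℤ) * ((k : ℤ) - 1) - (x₂ : ℤ) * c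
          = 2 * ((K' : ℤ) - (x' : ℤ) * c) := by rw [hK'z, hx'z]; ring
      omega
    have hfin : 2 * (d : ℤ) ≤ (d : ℤ) * ((k : ℤ) * ((k : ℤ) - 1) - (x₂ : ℤ) * c) := by
      nlinarith [h2le, hd2z]
    have hgoal : 2 * (d : ℤ) < (k : ℤ) * ((k : ℤ) - 1) := by
      rw [hE] at hfin
      linarith
    have h2 : ((2 * d : ℕ) : ℤ) < ((k * (k - 1) : ℕ) : ℤ) := by
      rw [hKc]; push_cast; linarith
    exact_mod_cast h2
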